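/- Let M ≥ 1 be an integer, let t_1 < t_2 < … < t_M be integers with t_1 ≥ 1, let ε be a real number with 0 < ε ≤ t_1, and set K = t_1·t_2···t_M. For r = (r_1, …, r_M) ∈ ℝ^M, let W(r) = ⋃_{m=1}^M [(t_m·ℤ + r_m)/K + (−ε/(2K), ε/(2K))] and let μ(r) denote the Lebesgue measure of [0,1) \ W(r). Then (1/K^M) ∫_{[0,K)^M} μ(r) dr = ∏_{m=1}^M (1 − ε/t_m). -/

import Mathlib

open MeasureTheory Filter Set

/-- The union `⋃_m (t_m·ℤ + r_m)/K + (−ε/(2K), ε/(2K))`, where `K = t_1⋯t_M`. -/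
def covUnion (M : ℕ) (t : Fin M → ℕ) (ε : ℝ) (r : Fin M → ℝ) : Set ℝ :=
  ⋃ m : Fin M, {x : ℝ | ∃ a : ℤ,
    |x - ((t m : ℝ) * (a : ℝ) + r m) / (∏ m' : Fin M, (t m' : ℝ))| <
      ε / (2 * ∏ m' : Fin M, (t m' : ℝ))}

/-- The set of shifts `s` such that `c` is within `ε/2` of `s + Tℤ`. -/
def Sset (T c ε : ℝ) : Set ℝ := {s : ℝ | ∃ a : ℤ, |c - T * a - s| < ε / 2}

lemma Sset_eq (T c ε : ℝ) :
    Sset T c ε = ⋃ a : ℤ, Ioo (c - T * a - ε / 2) (c - T * a + ε / 2) := by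
  ext s
  simp only [Sset, mem_setOf_eq, mem_iUnion, mem_Ioo]
  refine exists_congr fun a => ?_
  rw [abs_lt]
  constructor
  · rintro ⟨h1, h2⟩; constructor <;> linarith
  · rintro ⟨h1, h2⟩; constructor <;> linarith

lemma Sset_isOpen (T c ε : ℝ) : IsOpen (Sset T c ε) := by
  rw [Sset_eq]; exact isOpen_iUnion fun a => isOpen_Ioo

lemma Sset_measurableSet (T c ε : ℝ) : MeasurableSet (Sset T c ε) :=
  (Sset_isOpen T c ε).measurableSet

lemma Sset_add_mem_iff (T c ε s : ℝ) : s + T ∈ Sset T c ε ↔ s ∈ Sset T c ε := by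
  constructor
  · rintro ⟨a, ha⟩
    refine ⟨a + 1, ?_⟩
    have h : c - T * ((a : ℝ) + 1) - s = c - T * a - (s + T) := by ring
    push_cast
    rw [h]; exact ha
  · rintro ⟨a, ha⟩
    refine ⟨a - 1, ?_⟩
    have h : c - T * ((a : ℝ) - 1) - (s + T) = c - T * a - s := by ring
    push_cast
    rw [h]; exact ha

lemma Sset_indicator_periodic (T c ε : ℝ) :
    Function.Periodic ((Sset T c ε).indicator (fun _ => (1:ℝ))) T := by
  intro s
  by_cases h : s ∈ Sset T c ε
  · rw [Set.indicator_of_mem h, Set.indicator_of_mem ((Sset_add_mem_iff T c ε s).2 h)]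
  · rw [Set.indicator_of_notMem h,
      Set.indicator_of_notMem (fun hc => h ((Sset_add_mem_iff T c ε s).1 hc))]

lemma setIntegral_indicator_one {α : Type*} [MeasureSpace α] {s A : Set α}
    (hA : MeasurableSet A) :
    ∫ x in s, A.indicator (fun _ => (1:ℝ)) x = (volume (s ∩ A)).toReal := by
  rw [setIntegral_indicator hA]; simp [setIntegral_const, Measure.real]

lemma Sset_window (T c ε : ℝ) (hT : 0 < T) (hε : 0 < ε) (hεT : ε ≤ T) :
    Ioc (c - T / 2) (c - T / 2 + T) ∩ Sset T c ε = Ioo (c - ε / 2) (c + ε / 2) := by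
  ext s
  simp only [mem_inter_iff, mem_Ioc, mem_Ioo, Sset, mem_setOf_eq]
  constructor
  · rintro ⟨⟨hs1, hs2⟩, a, ha⟩
    by_cases h0 : a = 0
    · subst h0
      simp only [Int.cast_zero, mul_zero, sub_zero] at ha
      rw [abs_lt] at ha
      constructor <;> linarith [ha.1, ha.2]
    · exfalso
      have h1 : (1:ℝ) ≤ |(a:ℝ)| := by exact_mod_cast Int.one_le_abs h0
      have hTa : T ≤ |T * a| := by
        rw [abs_mul, abs_of_pos hT]; nlinarith
      have hcs : |c - s| ≤ T / 2 := abs_le.2 ⟨by linarith, by linarith⟩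
      have hkey : |T * a| - |c - s| ≤ |(c - s) - T * a| := by
        have := abs_sub_abs_le_abs_sub (T * (a:ℝ)) (c - s)
        have h2 : |T * (a:ℝ) - (c - s)| = |(c - s) - T * a| := abs_sub_comm _ _
        linarith [this, h2.le, h2.ge]
      have h3 : c - T * a - s = (c - s) - T * a := by ring
      rw [h3] at ha
      have : T / 2 ≤ |(c - s) - T * (a:ℝ)| := by linarith
      linarith
  · rintro ⟨h1, h2⟩
    refine ⟨⟨by linarith, by linarith⟩, 0, ?_⟩
    simp only [Int.cast_zero, mul_zero, sub_zero]
    rw [abs_lt]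
    constructor <;> linarith

lemma Sset_key_inter (T c ε : ℝ) (hT : 0 < T) (hε : 0 < ε) (hεT : ε ≤ T) (n : ℕ) :
    (volume (Ico 0 ((n:ℝ) * T) ∩ Sset T c ε)).toReal = n * ε := by
  have hmeas := Sset_measurableSet T c ε
  set f := (Sset T c ε).indicator (fun _ => (1:ℝ)) with hf
  have h_int : ∀ t₁ t₂ : ℝ, IntervalIntegrable f volume t₁ t₂ := by
    intro t₁ t₂
    apply IntegrableOn.intervalIntegrable
    have hconst : IntegrableOn (fun _ => (1:ℝ)) (uIcc t₁ t₂) volume := by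
      refine integrableOn_const ?_
      rw [Set.uIcc]
      exact measure_Icc_lt_top.ne
    exact hconst.indicator hmeas
  have hper := Sset_indicator_periodic T c ε
  have h0 : (0:ℝ) ≤ (n:ℝ) * T := by positivity
  have honep : ∫ s in (0:ℝ)..T, f s = ε := by
    have h1 : ∫ s in (0:ℝ)..T, f s = ∫ s in (c - T/2)..(c - T/2 + T), f s := by
      have := hper.intervalIntegral_add_eq 0 (c - T/2)
      simpa using this
    have h2 : ∫ s in (c - T/2)..(c - T/2 + T), f s
        = (volume (Ioc (c - T/2) (c - T/2 + T) ∩ Sset T c ε)).toReal := by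
      rw [intervalIntegral.integral_of_le (by linarith), hf, setIntegral_indicator_one hmeas]
    rw [h1, h2, Sset_window T c ε hT hε hεT, Real.volume_Ioo,
      ENNReal.toReal_ofReal (by linarith)]
    ring
  calc (volume (Ico 0 ((n:ℝ) * T) ∩ Sset T c ε)).toReal
      = ∫ s in Ico (0:ℝ) ((n:ℝ) * T), f s := (setIntegral_indicator_one hmeas).symm
    _ = ∫ s in Ioc (0:ℝ) ((n:ℝ) * T), f s := by
        rw [integral_Ico_eq_integral_Ioo, integral_Ioc_eq_integral_Ioo]
    _ = ∫ s in (0:ℝ)..((n:ℝ) * T), f s := (intervalIntegral.integral_of_le h0).symm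
    _ = (n:ℤ) • ∫ s in (0:ℝ)..T, f s := by
        have := hper.intervalIntegral_add_zsmul_eq (n:ℤ) 0 h_int
        simp only [zero_add, zsmul_eq_mul, Int.cast_natCast] at this ⊢
        rw [← this]
    _ = n * ε := by rw [honep]; simp

lemma Sset_key_diff (T c ε : ℝ) (hT : 0 < T) (hε : 0 < ε) (hεT : ε ≤ T) (n : ℕ) :
    (volume (Ico 0 ((n:ℝ) * T) \ Sset T c ε)).toReal = n * T - n * ε := by
  have hmeas := Sset_measurableSet T c ε
  have h0 : (0:ℝ) ≤ (n:ℝ) * T := by positivity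
  have hIco : volume (Ico (0:ℝ) ((n:ℝ) * T)) = ENNReal.ofReal ((n:ℝ) * T) := by
    rw [Real.volume_Ico, sub_zero]
  have hfin : volume (Ico (0:ℝ) ((n:ℝ) * T)) ≠ ⊤ := by
    rw [hIco]; exact ENNReal.ofReal_ne_top
  have hfin1 : volume (Ico (0:ℝ) ((n:ℝ) * T) ∩ Sset T c ε) ≠ ⊤ :=
    ne_top_of_le_ne_top hfin (measure_mono inter_subset_left)
  have hfin2 : volume (Ico (0:ℝ) ((n:ℝ) * T) \ Sset T c ε) ≠ ⊤ :=
    ne_top_of_le_ne_top hfin (measure_mono diff_subset)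
  have hadd := measure_inter_add_diff (μ := volume) (Ico (0:ℝ) ((n:ℝ) * T)) hmeas
  have htr : (volume (Ico (0:ℝ) ((n:ℝ) * T) ∩ Sset T c ε)).toReal
      + (volume (Ico (0:ℝ) ((n:ℝ) * T) \ Sset T c ε)).toReal = (n:ℝ) * T := by
    rw [← ENNReal.toReal_add hfin1 hfin2, hadd, hIco, ENNReal.toReal_ofReal h0]
  have hk := Sset_key_inter T c ε hT hε hεT n
  linarith

theorem stmt11 (M : ℕ) (hM : 1 ≤ M) (t : Fin M → ℕ)
    (ht : StrictMono t) (ht1 : ∀ m, 1 ≤ t m)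
    (ε : ℝ) (hε : 0 < ε) (hεt : ∀ m, ε ≤ (t m : ℝ)) :
    (1 / (∏ m : Fin M, (t m : ℝ)) ^ M) *
      ∫ r : Fin M → ℝ in
        Set.univ.pi (fun _ : Fin M => Set.Ico (0:ℝ) (∏ m : Fin M, (t m : ℝ))),
        (volume (Set.Ico (0:ℝ) 1 \ covUnion M t ε r)).toReal =
      ∏ m : Fin M, (1 - ε / (t m : ℝ)) := by
  set K : ℝ := ∏ m : Fin M, (t m : ℝ) with hKdef
  have htpos : ∀ m, (0:ℝ) < (t m : ℝ) := fun m => by exact_mod_cast ht1 m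
  have hK : 0 < K := Finset.prod_pos fun m _ => htpos m
  -- the cofactor
  set n : Fin M → ℕ := fun m => ∏ m' ∈ Finset.univ.erase m, t m' with hndef
  have hKn : ∀ m, K = (t m : ℝ) * (n m : ℝ) := by
    intro m
    rw [hKdef, hndef]
    push_cast
    rw [Finset.mul_prod_erase Finset.univ (fun m' => ((t m' : ℝ))) (Finset.mem_univ m)]
  set box : Set (Fin M → ℝ) := Set.univ.pi (fun _ : Fin M => Set.Ico (0:ℝ) K) with hbox
  -- membership translation
  have hmem : ∀ (r : Fin M → ℝ) (x : ℝ),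
      x ∈ covUnion M t ε r ↔ ∃ m : Fin M, r m ∈ Sset (t m) (K * x) ε := by
    intro r x
    unfold covUnion Sset
    simp only [mem_iUnion, mem_setOf_eq, ← hKdef]
    refine exists_congr fun m => exists_congr fun a => ?_
    have h1 : x - ((t m : ℝ) * a + r m) / K = (K * x - (t m : ℝ) * a - r m) / K := by
      field_simp
      ring
    rw [h1, abs_div, abs_of_pos hK, show ε / (2 * K) = (ε / 2) / K by rw [div_div],
      div_lt_div_iff_of_pos_right hK]
  have hcov_open : ∀ r : Fin M → ℝ, IsOpen (covUnion M t ε r) := by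
    intro r
    unfold covUnion
    apply isOpen_iUnion
    intro m
    rw [Set.setOf_exists]
    apply isOpen_iUnion
    intro a
    have : {x : ℝ | |x - ((t m : ℝ) * a + r m) / (∏ m' : Fin M, (t m' : ℝ))| <
        ε / (2 * ∏ m' : Fin M, (t m' : ℝ))}
        = Metric.ball (((t m : ℝ) * a + r m) / (∏ m' : Fin M, (t m' : ℝ)))
            (ε / (2 * ∏ m' : Fin M, (t m' : ℝ))) := by
      ext x; simp [Metric.mem_ball, Real.dist_eq]
    rw [this]
    exact Metric.isOpen_ball
  -- the product function
  set F : (Fin M → ℝ) → ℝ → ℝ := fun r x =>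
    ∏ m : Fin M, ((Sset (t m) (K * x) ε)ᶜ).indicator (fun _ => (1:ℝ)) (r m) with hF
  -- step 1 : rewrite inner measure as integral
  have step1 : ∀ r : Fin M → ℝ,
      (volume (Set.Ico (0:ℝ) 1 \ covUnion M t ε r)).toReal = ∫ x in Ico (0:ℝ) 1, F r x := by
    intro r
    have hcovm : MeasurableSet (covUnion M t ε r) := (hcov_open r).measurableSet
    rw [diff_eq, ← setIntegral_indicator_one hcovm.compl]
    refine integral_congr_ae (Eventually.of_forall fun x => ?_)
    by_cases hx : x ∈ covUnion M t ε r
    · rw [Set.indicator_of_notMem (by simpa using hx)]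
      obtain ⟨m, hm⟩ := (hmem r x).1 hx
      exact (Finset.prod_eq_zero (Finset.mem_univ m)
        (Set.indicator_of_notMem (Set.notMem_compl_iff.2 hm) _)).symm
    · rw [Set.indicator_of_mem (Set.mem_compl hx)]
      symm
      refine Finset.prod_eq_one fun m _ => ?_
      exact Set.indicator_of_mem (Set.mem_compl fun hc => hx ((hmem r x).2 ⟨m, hc⟩)) _
  -- joint measurability set
  set V : Set ((Fin M → ℝ) × ℝ) :=
    (⋃ m : Fin M, {p : (Fin M → ℝ) × ℝ | ∃ a : ℤ,
      |K * p.2 - (t m : ℝ) * a - p.1 m| < ε / 2})ᶜ with hV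
  have hVmeas : MeasurableSet V := by
    rw [hV]
    apply MeasurableSet.compl
    apply MeasurableSet.iUnion
    intro m
    rw [Set.setOf_exists]
    apply MeasurableSet.iUnion
    intro a
    have hcont : Continuous fun p : (Fin M → ℝ) × ℝ => K * p.2 - (t m : ℝ) * a - p.1 m := by
      fun_prop
    have : IsOpen {p : (Fin M → ℝ) × ℝ | |K * p.2 - (t m : ℝ) * a - p.1 m| < ε / 2} :=
      isOpen_lt (hcont.abs) continuous_const
    exact this.measurableSet
  have hGV : Function.uncurry F = V.indicator (fun _ => (1:ℝ)) := by
    funext p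
    have hiff : p ∈ V ↔ ∀ m : Fin M, p.1 m ∉ Sset (t m) (K * p.2) ε := by
      rw [hV]
      simp only [mem_compl_iff, mem_iUnion, not_exists]
      exact Iff.rfl
    show F p.1 p.2 = V.indicator (fun _ => (1:ℝ)) p
    by_cases hp : p ∈ V
    · rw [Set.indicator_of_mem hp]
      refine Finset.prod_eq_one fun m _ => ?_
      exact Set.indicator_of_mem (Set.mem_compl (hiff.1 hp m)) _
    · rw [Set.indicator_of_notMem hp]
      rw [hiff] at hp
      push_neg at hp
      obtain ⟨m, hm⟩ := hp
      exact Finset.prod_eq_zero (Finset.mem_univ m)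
        (Set.indicator_of_notMem (Set.notMem_compl_iff.2 hm) _)
  -- finiteness instances
  have hboxfin : volume box < ⊤ := by
    rw [hbox, volume_pi_pi]
    exact ENNReal.prod_lt_top fun m _ => by
      rw [Real.volume_Ico]; exact ENNReal.ofReal_lt_top
  haveI : IsFiniteMeasure (volume.restrict box) :=
    ⟨by rw [Measure.restrict_apply_univ]; exact hboxfin⟩
  haveI : IsFiniteMeasure (volume.restrict (Ico (0:ℝ) 1)) :=
    ⟨by rw [Measure.restrict_apply_univ]; exact measure_Ico_lt_top⟩
  -- integrability for Fubini
  have hint : Integrable (Function.uncurry F)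
      ((volume.restrict box).prod (volume.restrict (Ico (0:ℝ) 1))) := by
    rw [hGV]
    refine Integrable.mono' (integrable_const 1)
      ((measurable_const.indicator hVmeas).aestronglyMeasurable)
      (Eventually.of_forall fun p => ?_)
    by_cases hp : p ∈ V
    · rw [Set.indicator_of_mem hp]; simp
    · rw [Set.indicator_of_notMem hp]; simp
  -- Fubini
  have fubini : ∫ r in box, ∫ x in Ico (0:ℝ) 1, F r x
      = ∫ x in Ico (0:ℝ) 1, ∫ r in box, F r x :=
    integral_integral_swap hint
  -- inner integral computation for fixed x
  have step3 : ∀ x : ℝ, ∫ r in box, F r x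
      = ∏ m : Fin M, ((n m : ℝ) * (t m : ℝ) - (n m : ℝ) * ε) := by
    intro x
    have hprodind : ∀ r : Fin M → ℝ, F r x
        = (Set.univ.pi fun m => (Sset (t m) (K * x) ε)ᶜ).indicator (fun _ => (1:ℝ)) r := by
      intro r
      by_cases h : r ∈ Set.univ.pi fun m => (Sset (t m) (K * x) ε)ᶜ
      · rw [Set.indicator_of_mem h, hF]
        exact Finset.prod_eq_one fun m _ =>
          Set.indicator_of_mem (h m (Set.mem_univ m)) _
      · rw [Set.indicator_of_notMem h]
        rw [Set.mem_univ_pi] at h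
        push_neg at h
        obtain ⟨m, hm⟩ := h
        rw [mem_compl_iff, not_not] at hm
        exact Finset.prod_eq_zero (Finset.mem_univ m)
          (Set.indicator_of_notMem (Set.notMem_compl_iff.2 hm) _)
    have hpim : MeasurableSet (Set.univ.pi fun m : Fin M => (Sset (t m) (K * x) ε)ᶜ) :=
      MeasurableSet.univ_pi fun m => (Sset_measurableSet _ _ _).compl
    calc ∫ r in box, F r x
        = ∫ r in box,
            (Set.univ.pi fun m => (Sset (t m) (K * x) ε)ᶜ).indicator (fun _ => (1:ℝ)) r := by
          exact integral_congr_ae (Eventually.of_forall fun r => hprodind r)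
      _ = (volume (box ∩ Set.univ.pi fun m => (Sset (t m) (K * x) ε)ᶜ)).toReal :=
          setIntegral_indicator_one hpim
      _ = (volume (Set.univ.pi fun m : Fin M =>
            Ico (0:ℝ) K ∩ (Sset (t m) (K * x) ε)ᶜ)).toReal := by
          rw [hbox, ← Set.pi_inter_distrib]
      _ = ∏ m : Fin M, (volume (Ico (0:ℝ) K ∩ (Sset (t m) (K * x) ε)ᶜ)).toReal := by
          rw [volume_pi_pi, ENNReal.toReal_prod]
      _ = ∏ m : Fin M, ((n m : ℝ) * (t m : ℝ) - (n m : ℝ) * ε) := by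
          refine Finset.prod_congr rfl fun m _ => ?_
          rw [← Set.diff_eq, show Ico (0:ℝ) K = Ico (0:ℝ) ((n m : ℝ) * (t m : ℝ)) by
            rw [hKn m]; ring_nf]
          exact Sset_key_diff (t m) (K * x) ε (htpos m) hε (hεt m) (n m)
  -- put everything together
  have hmain : ∫ r in box, (volume (Set.Ico (0:ℝ) 1 \ covUnion M t ε r)).toReal
      = ∏ m : Fin M, ((n m : ℝ) * (t m : ℝ) - (n m : ℝ) * ε) := by
    calc ∫ r in box, (volume (Set.Ico (0:ℝ) 1 \ covUnion M t ε r)).toReal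
        = ∫ r in box, ∫ x in Ico (0:ℝ) 1, F r x :=
          integral_congr_ae (Eventually.of_forall fun r => step1 r)
      _ = ∫ x in Ico (0:ℝ) 1, ∫ r in box, F r x := fubini
      _ = ∫ x in Ico (0:ℝ) 1, ∏ m : Fin M, ((n m : ℝ) * (t m : ℝ) - (n m : ℝ) * ε) :=
          integral_congr_ae (Eventually.of_forall fun x => step3 x)
      _ = ∏ m : Fin M, ((n m : ℝ) * (t m : ℝ) - (n m : ℝ) * ε) := by
          rw [setIntegral_const, Measure.real, Real.volume_Ico]
          norm_num
  rw [hmain]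
  have hfac : ∀ m : Fin M, (n m : ℝ) * (t m : ℝ) - (n m : ℝ) * ε
      = K * (1 - ε / (t m : ℝ)) := by
    intro m
    have htm : (t m : ℝ) ≠ 0 := (htpos m).ne'
    rw [hKn m]
    field_simp
  rw [Finset.prod_congr rfl fun m _ => hfac m, Finset.prod_mul_distrib,
    Finset.prod_const, Finset.card_univ, Fintype.card_fin]
  have hKM : K ^ M ≠ 0 := pow_ne_zero _ hK.ne'
  field_simp
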